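/- Let V be a linear subspace of ℝ^m. Then every nonzero vector of V has both a strictly positive and a strictly negative coordinate if and only if there exists a vector w ∈ ℝ^m with all coordinates strictly positive which is orthogonal to V (with respect to the standard inner product). -/

import Mathlib

theorem balanced_iff_exists_positive_orthogonal (m : ℕ) (V : Submodule ℝ (Fin m → ℝ)) :
    (∀ v ∈ V, v ≠ 0 → (∃ i, 0 < v i) ∧ (∃ i, v i < 0)) ↔
    (∃ w : Fin m → ℝ, (∀ i, 0 < w i) ∧ ∀ v ∈ V, ∑ i, w i * v i = 0) := by
  constructor
  · intro hbal
    -- Separate the standard simplex (compact convex) from V (closed convex).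
    have hdisj : Disjoint (stdSimplex ℝ (Fin m)) (V : Set (Fin m → ℝ)) := by
      rw [Set.disjoint_left]
      rintro x ⟨hx0, hx1⟩ hxV
      have hxne : x ≠ 0 := by
        intro h
        rw [h] at hx1
        simpa using hx1
      obtain ⟨-, i, hi⟩ := hbal x hxV hxne
      exact absurd (hx0 i) (not_le.mpr hi)
    obtain ⟨f, u, v, hfs, huv, hft⟩ :=
      geometric_hahn_banach_compact_closed (convex_stdSimplex ℝ (Fin m))
        (isCompact_stdSimplex ℝ (Fin m)) V.convex
        (Submodule.closed_of_finiteDimensional V) hdisj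
    -- f vanishes on V
    have hfV : ∀ x ∈ V, f x = 0 := by
      intro x hx
      by_contra h
      have hmem : ((v - 1) / f x) • x ∈ V := V.smul_mem _ hx
      have := hft _ hmem
      rw [map_smul, smul_eq_mul, div_mul_cancel₀ _ h] at this
      linarith
    have hv0 : v < 0 := by simpa using hft 0 V.zero_mem
    -- basis vectors lie in the simplex
    have he : ∀ i : Fin m, (fun j => if i = j then (1 : ℝ) else 0) ∈ stdSimplex ℝ (Fin m) := by
      intro i
      constructor
      · intro j; dsimp only; split <;> norm_num
      · simp
    refine ⟨fun i => -f (fun j => if i = j then (1 : ℝ) else 0), fun i => ?_, ?_⟩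
    · have := hfs _ (he i)
      simp only [neg_pos]
      linarith
    · intro x hx
      have hxeq : x = ∑ i, x i • (fun j => if i = j then (1 : ℝ) else 0) :=
        pi_eq_sum_univ x
      have : f x = ∑ i, x i * f (fun j => if i = j then (1 : ℝ) else 0) := by
        conv_lhs => rw [hxeq]
        rw [map_sum]
        simp [smul_eq_mul]
      have hfx := hfV x hx
      rw [this] at hfx
      calc ∑ i, (-f (fun j => if i = j then (1 : ℝ) else 0)) * x i
          = -∑ i, x i * f (fun j => if i = j then (1 : ℝ) else 0) := by
            rw [← Finset.sum_neg_distrib]; congr 1; ext i; ring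
        _ = 0 := by rw [hfx, neg_zero]
  · rintro ⟨w, hw, hortho⟩ x hxV hxne
    have hsum := hortho x hxV
    constructor
    · by_contra h
      push_neg at h
      have hall : ∀ i ∈ Finset.univ, w i * x i ≤ 0 := fun i _ =>
        mul_nonpos_of_nonneg_of_nonpos (hw i).le (h i)
      have hz := (Finset.sum_eq_zero_iff_of_nonpos hall).mp hsum
      apply hxne
      funext i
      have := hz i (Finset.mem_univ i)
      have hwi := (hw i).ne'
      have : x i = 0 := by
        rcases mul_eq_zero.mp this with h' | h'
        · exact absurd h' hwi
        · exact h'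
      simpa using this
    · by_contra h
      push_neg at h
      have hall : ∀ i ∈ Finset.univ, 0 ≤ w i * x i := fun i _ =>
        mul_nonneg (hw i).le (h i)
      have hz := (Finset.sum_eq_zero_iff_of_nonneg hall).mp hsum
      apply hxne
      funext i
      have := hz i (Finset.mem_univ i)
      have hwi := (hw i).ne'
      have : x i = 0 := by
        rcases mul_eq_zero.mp this with h' | h'
        · exact absurd h' hwi
        · exact h'
      simpa using this
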